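/- Let G be a globular group corresponding to a chain complex (K_n, ∂) (K_n = PG_n). Then G is isomorphic, as a globular group, to the group of eventually-zero double sequences (k_n^-, k_n^+) ∈ K_n × K_n satisfying ∂(k_n^ε) = k_{n-1}^+ - k_{n-1}^- for all n and ε, with structure maps π_n^ε sending the sequence (..., (k_m^-,k_m^+), ...) to the sequence that is zero above level n, has (k_n^ε, k_n^ε) at level n, and agrees with the original below level n. The isomorphism sends g ∈ G to the sequence of classes (π_n^-(g) mod G_{n-1}, π_n^+(g) mod G_{n-1}). -/

import Mathlib

/-- The quotient `G / G_{n-1}` of a globular group, in which the classes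
`π_n^ε(g) mod G_{n-1}` live (`PG_n = G_n/G_{n-1}` is its image of `G_n`). -/
abbrev GlobQn {G : Type*} [AddCommGroup G] (π : Bool → ℤ → G →+ G) (n : ℤ) :=
  G ⧸ (π true (n - 1)).range

/-- The map sending `g` to its double sequence of boundary classes
`(π_n^-(g) mod G_{n-1}, π_n^+(g) mod G_{n-1})`. -/
def globPhi {G : Type*} [AddCommGroup G] (π : Bool → ℤ → G →+ G) (g : G)
    (n : ℤ) (ε : Bool) : GlobQn π n :=
  QuotientAddGroup.mk (π ε n g)

/-- Steiner's double sequences associated to the chain complex of a globular group: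
eventually zero sequences with all components classes of `n`-arrows, satisfying
`∂(k_n^ε) = k_{n-1}^+ - k_{n-1}^-`. -/
def IsSteinerSeq {G : Type*} [AddCommGroup G] (π : Bool → ℤ → G →+ G)
    (f : ∀ n : ℤ, Bool → GlobQn π n) : Prop :=
  (∀ (n : ℤ) (ε : Bool), ∃ x : G, π true n x = x ∧
      (QuotientAddGroup.mk x : GlobQn π n) = f n ε) ∧
  (∃ N : ℤ, ∀ n ≥ N, ∀ ε, f n ε = 0) ∧
  (∀ (n : ℤ) (ε : Bool) (x : G), π true n x = x →
      (QuotientAddGroup.mk x : GlobQn π n) = f n ε →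
      (QuotientAddGroup.mk (π true (n - 1) x - π false (n - 1) x) :
          GlobQn π (n - 1)) = f (n - 1) true - f (n - 1) false)

/-- The globular structure on double sequences: `π_m^δ` truncates above level `m`,
puts `(k_m^δ, k_m^δ)` at level `m`, and keeps lower levels. -/
def steinerPi {G : Type*} [AddCommGroup G] (π : Bool → ℤ → G →+ G)
    (δ : Bool) (m : ℤ) (f : ∀ n : ℤ, Bool → GlobQn π n) :
    ∀ n : ℤ, Bool → GlobQn π n :=
  fun n ε =>
    if m < n then 0
    else if h : n = m then cast (congrArg (fun k => GlobQn π k) h).symm (f m δ)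
    else f n ε

/-- A globular group is isomorphic, as a globular group, to the group of Steiner
double sequences of its chain complex, via `g ↦ (π_n^-(g) mod G_{n-1}, π_n^+(g) mod G_{n-1})`:
this map lands in the Steiner sequences, is additive, injective, surjective onto them,
and intertwines the globular structures. -/
theorem globular_group_steiner_description
    {G : Type*} [AddCommGroup G] (π : Bool → ℤ → G →+ G)
    (hneg : ∀ (ε : Bool) (k : ℤ), k < 0 → π ε k = 0)
    (hglob_lt : ∀ (ε δ : Bool) (i j : ℤ), i < j → ∀ x, π ε i (π δ j x) = π ε i x)
    (hglob_le : ∀ (ε δ : Bool) (i j : ℤ), j ≤ i → ∀ x, π ε i (π δ j x) = π δ j x)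
    (harrow : ∀ x : G, ∃ n : ℤ, π true n x = x) :
    (∀ g : G, IsSteinerSeq π (globPhi π g)) ∧
    (∀ (g g' : G) (n : ℤ) (ε : Bool),
        globPhi π (g + g') n ε = globPhi π g n ε + globPhi π g' n ε) ∧
    (∀ g g' : G, (∀ (n : ℤ) (ε : Bool), globPhi π g n ε = globPhi π g' n ε) → g = g') ∧
    (∀ f : ∀ n : ℤ, Bool → GlobQn π n, IsSteinerSeq π f →
        ∃ g : G, ∀ (n : ℤ) (ε : Bool), globPhi π g n ε = f n ε) ∧
    (∀ (g : G) (δ : Bool) (m n : ℤ) (ε : Bool),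
        globPhi π (π δ m g) n ε = steinerPi π δ m (globPhi π g) n ε) := by
  -- Basic fixing lemmas
  have fix_le : ∀ (ε δ : Bool) (i j : ℤ), j ≤ i → ∀ x, π true j x = x → π ε i x = x := by
    intro ε δ i j hij x hx
    calc π ε i x = π ε i (π true j x) := by rw [hx]
      _ = π true j x := hglob_le ε true i j hij x
      _ = x := hx
  refine ⟨?_, ?_, ?_, ?_, ?_⟩
  · -- part 1 : lands in Steiner sequences
    intro g
    refine ⟨?_, ?_, ?_⟩
    · intro n ε
      exact ⟨π ε n g, hglob_le true ε n n le_rfl g, rfl⟩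
    · obtain ⟨N, hN⟩ := harrow g
      refine ⟨N + 1, ?_⟩
      intro n hn ε
      show (QuotientAddGroup.mk (π ε n g) : GlobQn π n) = 0
      rw [QuotientAddGroup.eq_zero_iff]
      refine ⟨g, ?_⟩
      have h1 : π true (n - 1) g = g := fix_le true true (n-1) N (by omega) g hN
      have h2 : π ε n g = g := fix_le ε true n N (by omega) g hN
      rw [h1, h2]
    · intro n ε x hx hmk
      have hmk' : x - π ε n g ∈ (π true (n-1)).range :=
        (QuotientAddGroup.eq_iff_sub_mem).mp hmk
      obtain ⟨y, hy⟩ := hmk'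
      have e1 : π true (n-1) y = π true (n-1) x - π true (n-1) g := by
        conv_lhs => rw [← hglob_le true true (n-1) (n-1) le_rfl y, hy]
        rw [map_sub, hglob_lt true ε (n-1) n (by omega) g]
      have e2 : π true (n-1) y = π false (n-1) x - π false (n-1) g := by
        conv_lhs => rw [← hglob_le false true (n-1) (n-1) le_rfl y, hy]
        rw [map_sub, hglob_lt false ε (n-1) n (by omega) g]
      have key : π true (n-1) x - π false (n-1) x = π true (n-1) g - π false (n-1) g := by
        rw [sub_eq_sub_iff_sub_eq_sub]
        exact e1.symm.trans e2
      show (QuotientAddGroup.mk _ : GlobQn π (n-1)) =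
        QuotientAddGroup.mk (π true (n-1) g) - QuotientAddGroup.mk (π false (n-1) g)
      rw [← QuotientAddGroup.mk_sub, key]
  · -- part 2 : additive
    intro g g' n ε
    show (QuotientAddGroup.mk (π ε n (g + g')) : GlobQn π n) = _
    rw [map_add]
    rfl
  · -- part 3 : injective
    intro g g' h
    have hd : ∀ (n : ℤ) (ε : Bool), π ε n (g - g') ∈ (π true (n-1)).range := by
      intro n ε
      have := (QuotientAddGroup.eq_iff_sub_mem).mp (h n ε)
      rw [← map_sub] at this
      exact this
    have key : ∀ n : ℤ, -1 ≤ n → π true n (g - g') = 0 := by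
      intro n hn
      refine Int.le_induction (motive := fun n _ => π true n (g - g') = 0) ?_ ?_ n hn
      · show π true (-1) (g - g') = 0
        rw [hneg true (-1) (by omega)]; rfl
      · intro n hn ih
        obtain ⟨y, hy⟩ := hd (n+1) true
        rw [show (n : ℤ) + 1 - 1 = n from by ring] at hy
        calc π true (n+1) (g - g') = π true n y := hy.symm
          _ = π true n (π true n y) := (hglob_le true true n n le_rfl y).symm
          _ = π true n (π true (n+1) (g - g')) := by rw [hy]
          _ = π true n (g - g') := hglob_lt true true n (n+1) (by omega) _
          _ = 0 := ih
    obtain ⟨N, hN⟩ := harrow (g - g')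
    have : g - g' = 0 := by
      rcases le_or_gt (-1) N with hle | hlt
      · rw [← hN]; exact key N hle
      · rw [← hN, hneg true N (by omega)]; rfl
    exact sub_eq_zero.mp this
  · -- part 4 : surjective onto Steiner sequences
    intro f hf
    obtain ⟨h1, ⟨N0, hN0⟩, h3⟩ := hf
    have hfneg : ∀ m : ℤ, m < 0 → ∀ ε, f m ε = 0 := by
      intro m hm ε
      obtain ⟨x, hx, hmk⟩ := h1 m ε
      rw [hneg true m hm] at hx
      simp only [AddMonoidHom.zero_apply] at hx
      rw [← hmk, ← hx]
      rfl
    have h3' : ∀ (k : ℤ) (x : G), π true (k+1) x = x →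
        (QuotientAddGroup.mk x : GlobQn π (k+1)) = f (k+1) true →
        (QuotientAddGroup.mk (π true k x - π false k x) : GlobQn π k)
          = f k true - f k false := by
      intro k x hx hmk
      have e : (k : ℤ) + 1 - 1 = k := by ring
      exact cast (congrArg (fun j : ℤ =>
        ((QuotientAddGroup.mk (π true j x - π false j x) : GlobQn π j)
          = f j true - f j false)) e) (h3 (k+1) true x hx hmk)
    have main : ∀ n : ℤ, -1 ≤ n → ∃ g : G, π true n g = g ∧
        (QuotientAddGroup.mk g : GlobQn π n) = f n true ∧
        ∀ m < n, ∀ ε, globPhi π g m ε = f m ε := by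
      intro n hn
      refine Int.le_induction (motive := fun n _ => ∃ g : G, π true n g = g ∧
          (QuotientAddGroup.mk g : GlobQn π n) = f n true ∧
          ∀ m < n, ∀ ε, globPhi π g m ε = f m ε) ?_ ?_ n hn
      · refine ⟨0, map_zero _, ?_, ?_⟩
        · rw [hfneg (-1) (by omega) true]; rfl
        · intro m hm ε
          show (QuotientAddGroup.mk (π ε m 0) : GlobQn π m) = f m ε
          rw [map_zero, hfneg m (by omega) ε]
          rfl
      · intro n hn ih
        obtain ⟨g, hg, hgt, hlow⟩ := ih
        obtain ⟨x, hx, hxmk⟩ := h1 (n+1) true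
        have hbd := h3' n x hx hxmk
        refine ⟨g + x - π true n x, ?_, ?_, ?_⟩
        · rw [map_sub, map_add, fix_le true true (n+1) n (by omega) g hg, hx,
            hglob_le true true (n+1) n (by omega) x]
        · have : (g + x - π true n x) - x = g - π true n x := by abel
          rw [← hxmk, QuotientAddGroup.eq_iff_sub_mem, this]
          refine ⟨g - π true n x, ?_⟩
          rw [show (n : ℤ) + 1 - 1 = n from by ring, map_sub, hg,
            hglob_le true true n n le_rfl x]
        · intro m hm ε
          show (QuotientAddGroup.mk (π ε m (g + x - π true n x)) : GlobQn π m) = f m ε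
          rw [map_sub, map_add]
          rcases lt_or_ge m n with hmn | hmn
          · rw [hglob_lt ε true m n hmn x]
            have : π ε m g + π ε m x - π ε m x = π ε m g := by abel
            rw [this]
            exact hlow m hmn ε
          · have hmeq : m = n := by omega
            subst hmeq
            rw [hglob_le ε true m m le_rfl x, fix_le ε true m m le_rfl g hg]
            cases ε with
            | true =>
              have : g + π true m x - π true m x = g := by abel
              rw [this]
              exact hgt
            | false =>
              have : g + π false m x - π true m x = g - (π true m x - π false m x) := by abel
              rw [this, QuotientAddGroup.mk_sub, hbd]
              show QuotientAddGroup.mk g - _ = _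
              rw [hgt]
              abel
    obtain ⟨g, hg, hgt, hlow⟩ := main (max N0 (-1)) (le_max_right _ _)
    have hgt0 : (QuotientAddGroup.mk g : GlobQn π (max N0 (-1))) = 0 := by
      rw [hgt]
      exact hN0 _ (le_max_left _ _) true
    obtain ⟨y, hy⟩ := (QuotientAddGroup.eq_zero_iff g).mp hgt0
    refine ⟨g, fun n ε => ?_⟩
    rcases lt_or_ge n (max N0 (-1)) with h | h
    · exact hlow n h ε
    · have hf0 : f n ε = 0 := hN0 n (le_trans (le_max_left _ _) h) ε
      show (QuotientAddGroup.mk (π ε n g) : GlobQn π n) = f n ε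
      rw [hf0, QuotientAddGroup.eq_zero_iff]
      refine ⟨g, ?_⟩
      have e1 : π true (n-1) g = g := by
        conv_lhs => rw [← hy]
        rw [hglob_le true true (n-1) (max N0 (-1) - 1) (by omega), hy]
      have e2 : π ε n g = g := by
        conv_lhs => rw [← hy]
        rw [hglob_le ε true n (max N0 (-1) - 1) (by omega), hy]
      rw [e1, e2]
  · -- part 5 : intertwines the globular structures
    intro g δ m n ε
    rcases lt_or_ge m n with h | h
    · rw [steinerPi]
      simp only [if_pos h]
      show (QuotientAddGroup.mk (π ε n (π δ m g)) : GlobQn π n) = 0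
      rw [QuotientAddGroup.eq_zero_iff, hglob_le ε δ n m (by omega) g]
      exact ⟨π δ m g, hglob_le true δ (n-1) m (by omega) g⟩
    · by_cases h2 : n = m
      · subst h2
        rw [steinerPi]
        simp only [lt_irrefl, if_false, dif_pos rfl, cast_eq]
        show (QuotientAddGroup.mk (π ε n (π δ n g)) : GlobQn π n) = QuotientAddGroup.mk (π δ n g)
        rw [hglob_le ε δ n n le_rfl g]
      · have hnm : n < m := by omega
        rw [steinerPi]
        simp only [if_neg (by omega : ¬ m < n), dif_neg h2]
        show (QuotientAddGroup.mk (π ε n (π δ m g)) : GlobQn π n) = _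
        rw [hglob_lt ε δ n m hnm g]
        rfl
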